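/- Suppose the field K is algebraically closed, and let ℜ ⊆ F(𝒜). Then the vanishing ideal of the set V(J(ℜ)) ∩ (K^*)^n equals J(ℜ) : x_[n] = I(ℜ); equivalently, the affine variety V(I(ℜ)) is the Zariski closure of V(J(ℜ)) ∩ (K^*)^n in K^n. -/

import Mathlib

open MvPolynomial

noncomputable section

variable {K : Type*} [Field K] {n : ℕ}

open Classical in
/-- The support `supp(a) = {i : aᵢ ≠ 0}` of the linear form `∑ᵢ aᵢ xᵢ ∈ S₁`,
where linear forms of `S = K[x₁,…,xₙ]` are identified with their coefficient
vectors `a : Fin n → K`. -/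
def lsupp (a : Fin n → K) : Finset (Fin n) :=
  Finset.univ.filter (fun i => a i ≠ 0)

/-- `ι(r) = ∑_{i ∈ supp r} aᵢ · x_{supp(r) ∖ {i}}` for the linear form `r = ∑ᵢ aᵢ xᵢ`. -/
def iotaL (a : Fin n → K) : MvPolynomial (Fin n) K :=
  ∑ i ∈ lsupp a, C (a i) * ∏ j ∈ (lsupp a).erase i, X j

/-- `x_[n] = x₁⋯xₙ`. -/
def xAll (n : ℕ) (K : Type*) [Field K] : MvPolynomial (Fin n) K := ∏ i, X i

/-- `a : Fin n → K` (identified with the linear form `∑ᵢ aᵢ xᵢ ∈ S₁`) is a relation of the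
central arrangement whose hyperplanes are the kernels of the linear forms `α i`, i.e. it lies
in the kernel of the map `S₁ → V*`, `xᵢ ↦ αᵢ`. -/
def IsRel {V : Type*} [AddCommGroup V] [Module K V]
    (α : Fin n → Module.Dual K V) (a : Fin n → K) : Prop :=
  ∑ i, a i • α i = 0

/-- `J(ℜ) = (ι(r) : r ∈ ℜ)`. -/
def Jid (R : Set (Fin n → K)) : Ideal (MvPolynomial (Fin n) K) :=
  Ideal.span (iotaL '' R)

/-- `I(ℜ) = (ι(r) : r ∈ K·ℜ)`. -/
def Iid (R : Set (Fin n → K)) : Ideal (MvPolynomial (Fin n) K) :=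
  Ideal.span (iotaL '' (Submodule.span K R : Set (Fin n → K)))

/-- The Orlik–Terao ideal `I(𝒜) = (ι(r) : r ∈ F(𝒜))`. -/
def OTid {V : Type*} [AddCommGroup V] [Module K V]
    (α : Fin n → Module.Dual K V) : Ideal (MvPolynomial (Fin n) K) :=
  Ideal.span (iotaL '' {a | IsRel α a})

/-- The codimension (height) of an ideal `I`: the infimum of the heights, in the prime
spectrum, of the prime ideals containing `I`. -/
def codim {R : Type*} [CommRing R] (I : Ideal R) : ℕ∞ :=
  ⨅ p ∈ {p : PrimeSpectrum R | I ≤ p.asIdeal}, Order.height p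

namespace OTProof

lemma mem_lsupp {u : Fin n → K} {i : Fin n} : i ∈ lsupp u ↔ u i ≠ 0 := by
  simp [lsupp]

lemma lsupp_nonempty {u : Fin n → K} (hu : u ≠ 0) : (lsupp u).Nonempty := by
  obtain ⟨i, hi⟩ := Function.ne_iff.mp hu
  exact ⟨i, mem_lsupp.mpr hi⟩

/-- dot product -/
def dotp (u w : Fin n → K) : K := ∑ i, u i * w i

lemma dotp_add_right (u w w' : Fin n → K) : dotp u (w + w') = dotp u w + dotp u w' := by
  simp [dotp, mul_add, Finset.sum_add_distrib]

lemma dotp_smul_right (u : Fin n → K) (t : K) (w : Fin n → K) :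
    dotp u (t • w) = t * dotp u w := by
  simp only [dotp, Finset.mul_sum]
  exact Finset.sum_congr rfl fun i _ => by simp; ring

def Wset (U : Submodule K (Fin n → K)) : Set (Fin n → K) := {w | ∀ u ∈ U, dotp u w = 0}

lemma Wset_add_smul {U : Submodule K (Fin n → K)} {w v : Fin n → K}
    (hw : w ∈ Wset U) (hv : v ∈ Wset U) (t : K) : w + t • v ∈ Wset U := by
  intro u hu
  rw [dotp_add_right, dotp_smul_right, hw u hu, hv u hu, mul_zero, add_zero]

def linF (v : Fin n → K) : MvPolynomial (Fin n) K := ∑ i, C (v i) * X i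

lemma eval_linF (v w : Fin n → K) : eval w (linF v) = dotp v w := by
  simp [linF, dotp]

/-- separation: if `v ∉ U` there is `w ∈ W(U)` with `⟨v,w⟩ ≠ 0`. -/
lemma sep {U : Submodule K (Fin n → K)} {v : Fin n → K} (hv : v ∉ U) :
    ∃ w ∈ Wset U, dotp v w ≠ 0 := by
  obtain ⟨f, hfv, hfU⟩ := U.exists_dual_map_eq_bot_of_notMem hv inferInstance
  have key : ∀ u : Fin n → K, dotp u (fun i => f (Pi.single i 1)) = f u := by
    intro u
    have hu : u = ∑ i, u i • (Pi.single i 1 : Fin n → K) := by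
      ext j; simp [Pi.single_apply]
    calc dotp u (fun i => f (Pi.single i 1)) = ∑ i, f (u i • (Pi.single i 1 : Fin n → K)) := by
          simp [dotp, map_smul, smul_eq_mul]
      _ = f u := by rw [← map_sum, ← hu]
  refine ⟨fun i => f (Pi.single i 1), fun u hu => ?_, ?_⟩
  · rw [key]
    have : f u ∈ U.map f := Submodule.mem_map_of_mem hu
    rw [hfU] at this
    simpa using this
  · rw [key]; exact hfv

def chi (s : Finset (Fin n)) : Fin n →₀ ℕ := ∑ j ∈ s, Finsupp.single j 1

lemma chi_apply (s : Finset (Fin n)) (i : Fin n) : chi s i = if i ∈ s then 1 else 0 := by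
  classical
  rw [chi, Finset.sum_apply']
  simp [Finsupp.single_apply, Finset.sum_ite_eq' s i (fun _ => 1)]

lemma prodX_eq (s : Finset (Fin n)) : (∏ j ∈ s, (X j : MvPolynomial (Fin n) K)) = monomial (chi s) 1 := by
  classical
  induction s using Finset.induction_on with
  | empty => simp [chi]
  | @insert a s hns ih =>
    rw [Finset.prod_insert hns, ih, show chi (insert a s) = Finsupp.single a 1 + chi s from Finset.sum_insert hns]
    rw [show (X a : MvPolynomial (Fin n) K) = monomial (Finsupp.single a 1) 1 by rw [← pow_one (X a : MvPolynomial (Fin n) K), X_pow_eq_monomial], monomial_mul, one_mul]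

lemma iotaL_eq (u : Fin n → K) :
    iotaL u = ∑ i ∈ lsupp u, C (u i) * monomial (chi ((lsupp u).erase i)) 1 := by
  rw [iotaL]
  exact Finset.sum_congr rfl fun i _ => by rw [prodX_eq]

lemma eval_monomial' (w : Fin n → K) (m : Fin n →₀ ℕ) (r : K) :
    eval w (monomial m r) = r * ∏ i, w i ^ m i := by
  rw [eval_monomial]
  congr 1
  exact Finsupp.prod_fintype _ _ (fun i => pow_zero (w i))

lemma eval_poly_line (g : Fin n → Polynomial K) (f : MvPolynomial (Fin n) K) (t : K) :
    Polynomial.eval t (aeval g f) = eval (fun i => Polynomial.eval t (g i)) f := by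
  induction f using MvPolynomial.induction_on with
  | C a => simp [Polynomial.algebraMap_eq]
  | add p q hp hq => simp [hp, hq]
  | mul_X p i hp => simp [hp]

def NBC (U : Submodule K (Fin n → K)) (a : Fin n →₀ ℕ) : Prop :=
  ∀ u ∈ U, ∀ (h : (lsupp u).Nonempty), ∃ i ∈ lsupp u, i ≠ (lsupp u).max' h ∧ a i = 0

def consL : (Fin n → K) →ₗ[K] (Fin (n+1) → K) where
  toFun v := Fin.cons 0 v
  map_add' v w := by ext i; refine Fin.cases ?_ ?_ i <;> simp
  map_smul' t v := by ext i; refine Fin.cases ?_ ?_ i <;> simp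

def tailL : (Fin (n+1) → K) →ₗ[K] (Fin n → K) := LinearMap.funLeft K K Fin.succ

lemma consL_apply (v : Fin n → K) : consL (K := K) v = Fin.cons 0 v := rfl

lemma tailL_apply (u : Fin (n+1) → K) (j : Fin n) : tailL (K := K) u j = u j.succ := rfl

lemma dotp_add_left (u u' w : Fin n → K) : dotp (u + u') w = dotp u w + dotp u' w := by
  simp [dotp, add_mul, Finset.sum_add_distrib]

lemma dotp_smul_left (t : K) (u w : Fin n → K) : dotp (t • u) w = t * dotp u w := by
  simp only [dotp, Finset.mul_sum]
  exact Finset.sum_congr rfl fun i _ => by simp; ring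

lemma max'_of (u : Fin (n+1) → K) (v : Fin n → K) (hv : ∀ j, u j.succ = v j)
    (hne : (lsupp u).Nonempty) (h' : (lsupp v).Nonempty) :
    (lsupp u).max' hne = Fin.succ ((lsupp v).max' h') := by
  apply le_antisymm
  · apply Finset.max'_le
    intro x hx
    rcases Fin.eq_zero_or_eq_succ x with rfl | ⟨j, rfl⟩
    · exact Fin.zero_le _
    · have hj : j ∈ lsupp v := mem_lsupp.mpr (by rw [← hv j]; exact mem_lsupp.mp hx)
      exact Fin.succ_le_succ_iff.mpr (Finset.le_max' _ j hj)
  · apply Finset.le_max'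
    have hm : v ((lsupp v).max' h') ≠ 0 := mem_lsupp.mp (Finset.max'_mem _ h')
    exact mem_lsupp.mpr (by rw [hv]; exact hm)

lemma NBC_tail_of_zero {U : Submodule K (Fin (n+1) → K)} {a : Fin (n+1) →₀ ℕ}
    (hNBC : NBC U a) : NBC (U.comap consL) (Finsupp.tail a) := by
  intro v hv h'
  have hvu : ∀ j : Fin n, (Fin.cons 0 v : Fin (n+1) → K) j.succ = v j := fun j => Fin.cons_succ _ _ _
  have hne : (lsupp (Fin.cons 0 v : Fin (n+1) → K)).Nonempty := by
    obtain ⟨j, hj⟩ := h'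
    exact ⟨j.succ, mem_lsupp.mpr (by rw [hvu j]; exact mem_lsupp.mp hj)⟩
  obtain ⟨i, hiu, himax, hai⟩ := hNBC (Fin.cons 0 v) hv hne
  have hi0 : i ≠ 0 := by
    intro h; subst h
    exact (mem_lsupp.mp hiu) (Fin.cons_zero _ _)
  obtain ⟨j, rfl⟩ := Fin.eq_succ_of_ne_zero hi0
  refine ⟨j, mem_lsupp.mpr (by rw [← hvu j]; exact mem_lsupp.mp hiu), ?_, ?_⟩
  · intro hj
    refine himax ?_
    rw [max'_of (Fin.cons 0 v) v hvu hne h']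
    exact congrArg Fin.succ hj
  · simpa [Finsupp.tail_apply] using hai

lemma NBC_tail_of_pos {U : Submodule K (Fin (n+1) → K)} {a : Fin (n+1) →₀ ℕ}
    (hNBC : NBC U a) (ha0 : a 0 ≠ 0) : NBC (U.map tailL) (Finsupp.tail a) := by
  rintro v ⟨u, huU, rfl⟩ h'
  have hvu : ∀ j : Fin n, u j.succ = tailL (K := K) u j := fun j => rfl
  have hne : (lsupp u).Nonempty := by
    obtain ⟨j, hj⟩ := h'
    exact ⟨j.succ, mem_lsupp.mpr (by rw [hvu j]; exact mem_lsupp.mp hj)⟩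
  obtain ⟨i, hiu, himax, hai⟩ := hNBC _ huU hne
  have hi0 : i ≠ 0 := by
    intro h; subst h; exact ha0 hai
  obtain ⟨j, rfl⟩ := Fin.eq_succ_of_ne_zero hi0
  refine ⟨j, mem_lsupp.mpr (by rw [← hvu j]; exact mem_lsupp.mp hiu), ?_, ?_⟩
  · intro hj
    refine himax ?_
    rw [max'_of u _ hvu hne h']
    exact congrArg Fin.succ hj
  · simpa [Finsupp.tail_apply] using hai

lemma cons_tail_mem {U : Submodule K (Fin (n+1) → K)} {u : Fin (n+1) → K}
    (hu : u ∈ U) (h0 : u 0 = 0) : Fin.tail u ∈ U.comap consL := by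
  have : consL (K := K) (Fin.tail u) = u := by
    rw [consL_apply]
    ext i
    refine Fin.cases ?_ ?_ i
    · rw [Fin.cons_zero, h0]
    · intro j; rw [Fin.cons_succ]; rfl
  simpa [Submodule.mem_comap, this] using hu

lemma W_cons_mem_zero {U : Submodule K (Fin (n+1) → K)} (h0 : ∀ u ∈ U, u 0 = 0) (t : K)
    {w' : Fin n → K} (hw' : w' ∈ Wset (U.comap consL)) : Fin.cons t w' ∈ Wset U := by
  intro u hu
  have : dotp u (Fin.cons t w') = u 0 * t + dotp (Fin.tail u) w' := by
    simp only [dotp, Fin.sum_univ_succ, Fin.cons_zero, Fin.cons_succ, Fin.tail]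
  rw [this, h0 u hu, zero_mul, zero_add]
  exact hw' _ (cons_tail_mem hu (h0 u hu))

lemma W_cons_mem_one {U : Submodule K (Fin (n+1) → K)} {u0 : Fin (n+1) → K} (hu0 : u0 ∈ U)
    (h1 : u0 0 = 1) {w' : Fin n → K} (hw' : w' ∈ Wset (U.comap consL)) :
    Fin.cons (-(dotp (Fin.tail u0) w')) w' ∈ Wset U := by
  intro u hu
  have hz : u - (u 0) • u0 ∈ U := sub_mem hu (Submodule.smul_mem _ _ hu0)
  have hz0 : (u - (u 0) • u0) 0 = 0 := by simp [h1]
  have hzw : dotp (Fin.tail (u - (u 0) • u0)) w' = 0 := hw' _ (cons_tail_mem hz hz0)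
  have hsplit : dotp u (Fin.cons (-(dotp (Fin.tail u0) w')) w')
      = u 0 * (-(dotp (Fin.tail u0) w')) + dotp (Fin.tail u) w' := by
    simp only [dotp, Fin.sum_univ_succ, Fin.cons_zero, Fin.cons_succ, Fin.tail]
  have htu : Fin.tail u = Fin.tail (u - (u 0) • u0) + (u 0) • Fin.tail u0 := by
    ext j; simp [Fin.tail]
  rw [hsplit, htu, dotp_add_left, hzw, dotp_smul_left]
  ring

lemma Wmap_subset_Wcomap {U : Submodule K (Fin (n+1) → K)} :
    Wset (U.map tailL) ⊆ Wset (U.comap (consL (K := K))) := by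
  intro w' hw' v hv
  have : tailL (K := K) (consL (K := K) v) = v := by
    ext j; rw [tailL_apply, consL_apply, Fin.cons_succ]
  rw [← this]
  exact hw' _ ⟨consL (K := K) v, hv, rfl⟩

lemma eval_cons_monomial (t : K) (w' : Fin n → K) (m : Fin (n+1) →₀ ℕ) (r : K) :
    eval (Fin.cons t w') (monomial m r) = r * t ^ (m 0) * ∏ j, w' j ^ (Finsupp.tail m j) := by
  rw [eval_monomial', Fin.prod_univ_succ, Fin.cons_zero, ← mul_assoc]
  simp only [Fin.cons_succ, Finsupp.tail_apply]

lemma tail_tsub (b a : Fin (n+1) →₀ ℕ) :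
    Finsupp.tail (b - a) = Finsupp.tail b - Finsupp.tail a := by
  ext j
  rw [Finsupp.tail_apply, Finsupp.tsub_apply, Finsupp.tsub_apply, Finsupp.tail_apply,
    Finsupp.tail_apply]

lemma aeval_monomial_line (w' : Fin n → K) (m : Fin (n+1) →₀ ℕ) (r : K) :
    aeval (Fin.cases Polynomial.X (fun j => Polynomial.C (w' j)) : Fin (n+1) → Polynomial K)
      (monomial m r)
    = Polynomial.C (r * ∏ j, w' j ^ Finsupp.tail m j) * Polynomial.X ^ (m 0) := by
  rw [aeval_monomial, Finsupp.prod_fintype _ _ (fun i => pow_zero _), Fin.prod_univ_succ]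
  simp only [Fin.cases_zero, Fin.cases_succ, Finsupp.tail_apply]
  rw [map_mul, map_prod, Polynomial.algebraMap_eq]
  simp only [map_pow]
  ring

lemma indep [Infinite K] : ∀ (n : ℕ) (U : Submodule K (Fin n → K)) (b : Fin n →₀ ℕ)
    (T : Finset (Fin n →₀ ℕ)) (c : (Fin n →₀ ℕ) → K),
    (∀ a ∈ T, NBC U a) → (∀ a ∈ T, ∀ i, a i ≤ b i) →
    (∀ w ∈ Wset U, eval w (∑ a ∈ T, monomial (b - a) (c a)) = 0) →
    ∀ a ∈ T, c a = 0 := by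
  intro n
  induction n with
  | zero =>
    intro U b T c hNBC hle hvan a ha
    have hw : (Fin.elim0 : Fin 0 → K) ∈ Wset U := by
      intro u hu; simp [dotp]
    have hv := hvan _ hw
    rw [map_sum] at hv
    have heval : ∀ a' ∈ T, eval (Fin.elim0 : Fin 0 → K) (monomial (b - a') (c a')) = c a' := by
      intro a' _; rw [eval_monomial']; simp
    rw [Finset.sum_congr rfl heval] at hv
    have hsub : T = {a} :=
      Finset.eq_singleton_iff_unique_mem.mpr ⟨ha, fun x _ => Finsupp.ext (fun i => i.elim0)⟩
    rw [hsub, Finset.sum_singleton] at hv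
    exact hv
  | succ n ihn =>
    classical
    intro U b T c
    induction T using Finset.strongInduction with
    | _ T ihT =>
    intro hNBC hle hvan
    by_cases hcase : ∃ u0 ∈ U, u0 0 ≠ 0
    · obtain ⟨u1, hu1U, hu10⟩ := hcase
      obtain ⟨u0, hu0U, h1⟩ : ∃ u0 ∈ U, u0 0 = 1 :=
        ⟨(u1 0)⁻¹ • u1, Submodule.smul_mem _ _ hu1U, by simp [inv_mul_cancel₀ hu10]⟩
      by_cases hsingle : (Pi.single 0 1 : Fin (n+1) → K) ∈ U
      · intro a ha
        have hs : lsupp (Pi.single 0 1 : Fin (n+1) → K) = {0} := by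
          ext i
          simp only [mem_lsupp, Finset.mem_singleton, Pi.single_apply]
          rcases eq_or_ne i 0 with h | h <;> simp [h]
        have hne : (lsupp (Pi.single 0 1 : Fin (n+1) → K)).Nonempty := by
          rw [hs]; exact ⟨0, Finset.mem_singleton_self 0⟩
        obtain ⟨i, hi, hmax, -⟩ := hNBC a ha _ hsingle hne
        have hi0 : i = 0 := by rw [hs] at hi; simpa using hi
        have hm : (lsupp (Pi.single 0 1 : Fin (n+1) → K)).max' hne = 0 := by
          apply le_antisymm
          · apply Finset.max'_le
            intro y hy
            rw [hs] at hy
            simp only [Finset.mem_singleton] at hy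
            exact le_of_eq hy
          · exact Finset.le_max' _ 0 (by rw [hs]; exact Finset.mem_singleton_self 0)
        exact absurd (hi0.trans hm.symm) hmax
      · have hu0' : Fin.tail u0 ∉ U.comap (consL (K := K)) := by
          intro hmem
          apply hsingle
          have heq : u0 - consL (K := K) (Fin.tail u0) = Pi.single 0 1 := by
            funext i
            refine Fin.cases ?_ ?_ i
            · simp [consL_apply, h1]
            · intro j
              simp [consL_apply, Fin.tail, Pi.single_apply, Fin.succ_ne_zero]
          rw [← heq]
          exact sub_mem hu0U hmem
        obtain ⟨vv, hvvW, hvvdot⟩ := sep hu0'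
        rcases T.eq_empty_or_nonempty with rfl | hTne
        · intro a ha; exact absurd ha (Finset.notMem_empty a)
        have himg : ((T.image (fun x => x 0))).Nonempty := hTne.image _
        obtain ⟨kst, hkst⟩ : ∃ kst, (T.image (fun x => x 0)).max' himg = kst := ⟨_, rfl⟩
        have hak : ∀ a' ∈ T, a' 0 ≤ kst := by
          intro a' ha'
          rw [← hkst]
          exact Finset.le_max' _ _ (Finset.mem_image_of_mem (fun x => x 0) ha')
        obtain ⟨atop, hatopT, hatop0⟩ : ∃ x ∈ T, x 0 = kst := by
          have hmm := Finset.max'_mem _ himg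
          rw [hkst] at hmm
          simpa [Finset.mem_image] using hmm
        have hkb : kst ≤ b 0 := hatop0 ▸ hle atop hatopT 0
        set τ : MvPolynomial (Fin n) K := -(linF (Fin.tail u0)) with hτdef
        have hτeval : ∀ w' : Fin n → K, eval w' τ = -(dotp (Fin.tail u0) w') := by
          intro w'; rw [hτdef, map_neg, eval_linF]
        set G := ∑ a' ∈ T, C (c a') * τ ^ (kst - a' 0)
            * monomial (Finsupp.tail b - Finsupp.tail a') 1 with hGdef
        have hgvan : ∀ w' ∈ Wset (U.comap (consL (K := K))),
            eval w' (∑ a' ∈ T, C (c a') * τ ^ (b 0 - a' 0)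
              * monomial (Finsupp.tail b - Finsupp.tail a') 1) = 0 := by
          intro w' hw'
          have hwW := W_cons_mem_one hu0U h1 hw'
          have hv := hvan _ hwW
          rw [map_sum] at hv ⊢
          rw [← hv]
          refine Finset.sum_congr rfl fun a' ha' => ?_
          rw [eval_cons_monomial, map_mul, map_mul, map_pow, eval_C, hτeval,
            eval_monomial', tail_tsub, Finsupp.tsub_apply]
          ring
        have halg : (∑ a' ∈ T, C (c a') * τ ^ (b 0 - a' 0)
            * monomial (Finsupp.tail b - Finsupp.tail a') 1) = τ ^ (b 0 - kst) * G := by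
          rw [hGdef, Finset.mul_sum]
          refine Finset.sum_congr rfl fun a' ha' => ?_
          rw [show b 0 - a' 0 = (b 0 - kst) + (kst - a' 0) from by
            have := hak a' ha'; omega, pow_add]
          ring
        have hGvan : ∀ w' ∈ Wset (U.comap (consL (K := K))), eval w' G = 0 := by
          intro w' hw'
          by_cases hτ0 : eval w' τ = 0
          · set q : Polynomial K :=
              aeval (fun j => Polynomial.C (w' j) + Polynomial.C (vv j) * Polynomial.X) G with hq
            have hqeval : ∀ t : K, Polynomial.eval t q = eval (w' + t • vv) G := by
              intro t
              rw [hq, eval_poly_line]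
              have hpt : (fun i => Polynomial.eval t
                  (Polynomial.C (w' i) + Polynomial.C (vv i) * Polynomial.X)) = w' + t • vv := by
                funext j
                rw [Polynomial.eval_add, Polynomial.eval_mul, Polynomial.eval_C,
                  Polynomial.eval_C, Polynomial.eval_X, Pi.add_apply, Pi.smul_apply,
                  smul_eq_mul, mul_comm (vv j) t]
              rw [hpt]
            have hqroot : ∀ t : K, t ≠ 0 → Polynomial.eval t q = 0 := by
              intro t ht
              have hwt : w' + t • vv ∈ Wset (U.comap (consL (K := K))) :=
                Wset_add_smul hw' hvvW t
              have hgv := hgvan _ hwt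
              rw [halg, map_mul, map_pow] at hgv
              have hτt : eval (w' + t • vv) τ ≠ 0 := by
                rw [hτeval, dotp_add_right, dotp_smul_right]
                have h0 : dotp (Fin.tail u0) w' = 0 := by
                  rw [hτeval, neg_eq_zero] at hτ0; exact hτ0
                rw [h0, zero_add, neg_ne_zero]
                exact mul_ne_zero ht hvvdot
              rw [hqeval]
              rcases mul_eq_zero.mp hgv with h | h
              · exact absurd ((pow_eq_zero_iff'.mp h).1) hτt
              · exact h
            have hinf : ({(0:K)}ᶜ : Set K).Infinite := (Set.finite_singleton 0).infinite_compl
            have hq0 : q = 0 :=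
              Polynomial.eq_zero_of_infinite_isRoot q
                (hinf.mono (fun t ht => hqroot t (by simpa using ht)))
            have hfin := hqeval 0
            rw [hq0, Polynomial.eval_zero, zero_smul, add_zero] at hfin
            exact hfin.symm
          · have hgv := hgvan w' hw'
            rw [halg, map_mul, map_pow] at hgv
            rcases mul_eq_zero.mp hgv with h | h
            · exact absurd ((pow_eq_zero_iff'.mp h).1) hτ0
            · exact h
        by_cases hk0 : kst = 0
        · subst hk0
          have hall0 : ∀ a' ∈ T, a' 0 = 0 := fun a' ha' => Nat.le_zero.mp (hak a' ha')
          have hinj0 : ∀ x ∈ T, ∀ y ∈ T, Finsupp.tail x = Finsupp.tail y → x = y := by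
            intro x hx y hy hxy
            rw [← Finsupp.cons_tail x, ← Finsupp.cons_tail y, hall0 x hx, hall0 y hy, hxy]
          have hlayer0 : ∀ w' ∈ Wset (U.comap (consL (K := K))),
              eval w' (∑ a' ∈ T.image Finsupp.tail,
                monomial (Finsupp.tail b - a') (c (Finsupp.cons 0 a'))) = 0 := by
            intro w' hw'
            rw [Finset.sum_image hinj0, map_sum]
            have hGv := hGvan w' hw'
            rw [hGdef, map_sum] at hGv
            have hterm0 : ∀ a'' ∈ T,
                eval w' (monomial (Finsupp.tail b - Finsupp.tail a'')
                  (c (Finsupp.cons 0 (Finsupp.tail a''))))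
                = eval w' (C (c a'') * τ ^ (0 - a'' 0)
                  * monomial (Finsupp.tail b - Finsupp.tail a'') 1) := by
              intro a'' ha''
              have h0 : a'' 0 = 0 := hall0 a'' ha''
              rw [show Finsupp.cons 0 (Finsupp.tail a'') = a'' by conv_rhs => rw [← Finsupp.cons_tail a'', h0],
                h0, Nat.sub_self, pow_zero, mul_one, map_mul, eval_C,
                eval_monomial', eval_monomial', one_mul]
            rw [Finset.sum_congr rfl hterm0]
            exact hGv
          have hccons0 : ∀ a' ∈ T.image Finsupp.tail, c (Finsupp.cons 0 a') = 0 := by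
            refine ihn (U.comap (consL (K := K))) (Finsupp.tail b) _
              (fun a' => c (Finsupp.cons 0 a')) ?_ ?_ hlayer0
            · intro a' ha'
              obtain ⟨a'', ha''mem, rfl⟩ := Finset.mem_image.mp ha'
              exact NBC_tail_of_zero (hNBC a'' ha''mem)
            · intro a' ha' i
              obtain ⟨a'', ha''mem, rfl⟩ := Finset.mem_image.mp ha'
              rw [Finsupp.tail_apply, Finsupp.tail_apply]
              exact hle a'' ha''mem i.succ
          intro a ha
          have hfin := hccons0 (Finsupp.tail a) (Finset.mem_image_of_mem _ ha)
          rw [← hall0 a ha, Finsupp.cons_tail] at hfin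
          exact hfin
        · -- kst ≥ 1 : kill the top layer via contraction, then recurse
          have hinjk : ∀ x ∈ T.filter (fun x => x 0 = kst), ∀ y ∈ T.filter (fun x => x 0 = kst),
              Finsupp.tail x = Finsupp.tail y → x = y := by
            intro x hx y hy hxy
            have hx0 : x 0 = kst := (Finset.mem_filter.mp hx).2
            have hy0 : y 0 = kst := (Finset.mem_filter.mp hy).2
            rw [← Finsupp.cons_tail x, ← Finsupp.cons_tail y, hx0, hy0, hxy]
          have hktop : ∀ a'' ∈ T.filter (fun x => x 0 = kst), c a'' = 0 := by
            have htop : ∀ w' ∈ Wset (U.map (tailL (K := K))),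
                eval w' (∑ a' ∈ (T.filter fun x => x 0 = kst).image Finsupp.tail,
                  monomial (Finsupp.tail b - a') (c (Finsupp.cons kst a'))) = 0 := by
              intro w' hw'
              have hw'c : w' ∈ Wset (U.comap (consL (K := K))) := Wmap_subset_Wcomap hw'
              have hGv := hGvan w' hw'c
              have hτ0 : eval w' τ = 0 := by
                rw [hτeval, neg_eq_zero]
                exact hw' _ ⟨u0, hu0U, rfl⟩
              rw [hGdef, map_sum,
                ← Finset.sum_filter_add_sum_filter_not T (fun x => x 0 = kst)
                  (fun a' => eval w' (C (c a') * τ ^ (kst - a' 0)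
                    * monomial (Finsupp.tail b - Finsupp.tail a') 1))] at hGv
              have hnotzero : ∑ a' ∈ T.filter (fun x => ¬ x 0 = kst),
                  eval w' (C (c a') * τ ^ (kst - a' 0)
                    * monomial (Finsupp.tail b - Finsupp.tail a') 1) = 0 := by
                refine Finset.sum_eq_zero fun a' ha' => ?_
                have hle1 : a' 0 ≤ kst := hak a' (Finset.mem_filter.mp ha').1
                have hne1 : ¬ a' 0 = kst := (Finset.mem_filter.mp ha').2
                rw [map_mul, map_mul, map_pow, hτ0, zero_pow (by omega), mul_zero, zero_mul]
              rw [hnotzero, add_zero] at hGv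
              rw [Finset.sum_image hinjk, map_sum]
              have hterm2 : ∀ a'' ∈ T.filter (fun x => x 0 = kst),
                  eval w' (monomial (Finsupp.tail b - Finsupp.tail a'')
                    (c (Finsupp.cons kst (Finsupp.tail a''))))
                  = eval w' (C (c a'') * τ ^ (kst - a'' 0)
                    * monomial (Finsupp.tail b - Finsupp.tail a'') 1) := by
                intro a'' ha''
                have h0 : a'' 0 = kst := (Finset.mem_filter.mp ha'').2
                rw [← h0, Finsupp.cons_tail, Nat.sub_self, pow_zero, mul_one, map_mul, eval_C,
                  eval_monomial', eval_monomial', one_mul]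
              rw [Finset.sum_congr rfl hterm2]
              exact hGv
            have hccons : ∀ a' ∈ (T.filter fun x => x 0 = kst).image Finsupp.tail,
                c (Finsupp.cons kst a') = 0 := by
              refine ihn (U.map (tailL (K := K))) (Finsupp.tail b) _
                (fun a' => c (Finsupp.cons kst a')) ?_ ?_ htop
              · intro a' ha'
                obtain ⟨a'', ha''mem, rfl⟩ := Finset.mem_image.mp ha'
                refine NBC_tail_of_pos (hNBC a'' (Finset.mem_filter.mp ha''mem).1) ?_
                rw [(Finset.mem_filter.mp ha''mem).2]
                exact hk0
              · intro a' ha' i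
                obtain ⟨a'', ha''mem, rfl⟩ := Finset.mem_image.mp ha'
                rw [Finsupp.tail_apply, Finsupp.tail_apply]
                exact hle a'' (Finset.mem_filter.mp ha''mem).1 i.succ
            intro a'' ha''
            have h0 : a'' 0 = kst := (Finset.mem_filter.mp ha'').2
            have hfin := hccons (Finsupp.tail a'') (Finset.mem_image_of_mem _ ha'')
            rw [← h0, Finsupp.cons_tail] at hfin
            exact hfin
          have hTss : T.filter (fun x => ¬ x 0 = kst) ⊂ T := by
            refine Finset.filter_ssubset.mpr ⟨atop, hatopT, ?_⟩
            simp [hatop0]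
          have hrest := ihT _ hTss
            (fun a' ha' => hNBC a' (Finset.mem_filter.mp ha').1)
            (fun a' ha' i => hle a' (Finset.mem_filter.mp ha').1 i)
            ?_
          · intro a ha
            by_cases h0 : a 0 = kst
            · exact hktop a (Finset.mem_filter.mpr ⟨ha, h0⟩)
            · exact hrest a (Finset.mem_filter.mpr ⟨ha, h0⟩)
          · intro w hw
            have hv := hvan w hw
            rw [← Finset.sum_filter_add_sum_filter_not T (fun x => x 0 = kst)
              (fun a' => monomial (b - a') (c a'))] at hv
            have hzero : (∑ a' ∈ T.filter (fun x => x 0 = kst),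
                monomial (b - a') (c a')) = 0 := by
              refine Finset.sum_eq_zero fun a' ha' => ?_
              rw [hktop a' ha']
              exact map_zero _
            rw [hzero, zero_add] at hv
            exact hv
    · -- every u ∈ U has u 0 = 0
      push_neg at hcase
      intro a ha
      obtain ⟨k, hk⟩ : ∃ k, a 0 = k := ⟨a 0, rfl⟩
      have hinj : ∀ x ∈ T.filter (fun x => x 0 = k), ∀ y ∈ T.filter (fun x => x 0 = k),
          Finsupp.tail x = Finsupp.tail y → x = y := by
        intro x hx y hy hxy
        have hx0 : x 0 = k := by simpa using (Finset.mem_filter.mp hx).2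
        have hy0 : y 0 = k := by simpa using (Finset.mem_filter.mp hy).2
        rw [← Finsupp.cons_tail x, ← Finsupp.cons_tail y, hx0, hy0, hxy]
      have hlayer : ∀ w' ∈ Wset (U.comap (consL (K := K))),
          eval w' (∑ a' ∈ (T.filter (fun x => x 0 = k)).image Finsupp.tail,
            monomial (Finsupp.tail b - a') (c (Finsupp.cons k a'))) = 0 := by
        intro w' hw'
        rw [Finset.sum_image hinj]
        set q : Polynomial K :=
          aeval (Fin.cases Polynomial.X (fun j => Polynomial.C (w' j)))
            (∑ a' ∈ T, monomial (b - a') (c a')) with hq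
        have hqeval : ∀ t : K, Polynomial.eval t q = 0 := by
          intro t
          rw [hq, eval_poly_line]
          have hpt : (fun i => Polynomial.eval t
              ((Fin.cases Polynomial.X (fun j => Polynomial.C (w' j)) : Fin (n+1) → Polynomial K) i))
              = Fin.cons t w' := by
            funext i
            refine Fin.cases ?_ ?_ i
            · simp
            · intro j; simp
          rw [hpt]
          exact hvan _ (W_cons_mem_zero hcase t hw')
        have hq0 : q = 0 := Polynomial.funext (fun t => by rw [hqeval t, Polynomial.eval_zero])
        have hqform : q = ∑ a' ∈ T,
            Polynomial.C (c a' * ∏ j, w' j ^ (Finsupp.tail b - Finsupp.tail a') j)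
              * Polynomial.X ^ (b 0 - a' 0) := by
          rw [hq, map_sum]
          refine Finset.sum_congr rfl fun a' ha' => ?_
          rw [aeval_monomial_line, tail_tsub, Finsupp.tsub_apply]
        have hco := congrArg (fun p => Polynomial.coeff p (b 0 - k)) hq0
        rw [hqform] at hco
        simp only [Polynomial.finset_sum_coeff, Polynomial.coeff_C_mul, Polynomial.coeff_X_pow,
          Polynomial.coeff_zero] at hco
        have hco2 : ∑ a' ∈ T, (if a' 0 = k then
            c a' * ∏ j, w' j ^ (Finsupp.tail b - Finsupp.tail a') j else 0) = 0 := by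
          refine Eq.trans (Finset.sum_congr rfl fun a' ha' => ?_) hco
          rw [mul_ite, mul_one, mul_zero]
          have h1 : a' 0 ≤ b 0 := hle a' ha' 0
          have h2 : k ≤ b 0 := hk ▸ hle a ha 0
          exact if_congr (by omega) rfl rfl
        rw [← Finset.sum_filter] at hco2
        rw [map_sum]
        have hterm : ∀ a'' ∈ T.filter (fun x => x 0 = k),
            eval w' (monomial (Finsupp.tail b - Finsupp.tail a'')
              (c (Finsupp.cons k (Finsupp.tail a''))))
              = c a'' * ∏ j, w' j ^ ((Finsupp.tail b - Finsupp.tail a'') j) := by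
          intro a'' ha''
          have h0 : a'' 0 = k := by simpa using (Finset.mem_filter.mp ha'').2
          rw [← h0, Finsupp.cons_tail, eval_monomial']
        rw [Finset.sum_congr rfl hterm]
        exact hco2
      have hccons : ∀ a' ∈ (T.filter (fun x => x 0 = k)).image Finsupp.tail,
          c (Finsupp.cons k a') = 0 := by
        refine ihn (U.comap (consL (K := K))) (Finsupp.tail b) _
          (fun a' => c (Finsupp.cons k a')) ?_ ?_ hlayer
        · intro a' ha'
          obtain ⟨a'', ha''mem, rfl⟩ := Finset.mem_image.mp ha'
          exact NBC_tail_of_zero (hNBC a'' (Finset.mem_filter.mp ha''mem).1)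
        · intro a' ha' i
          obtain ⟨a'', ha''mem, rfl⟩ := Finset.mem_image.mp ha'
          rw [Finsupp.tail_apply, Finsupp.tail_apply]
          exact hle a'' (Finset.mem_filter.mp ha''mem).1 i.succ
      have hfin := hccons (Finsupp.tail a)
          (Finset.mem_image_of_mem _ (Finset.mem_filter.mpr ⟨ha, hk⟩))
      rw [← hk, Finsupp.cons_tail] at hfin
      exact hfin
    

def pot (a : Fin n →₀ ℕ) : ℕ := ∑ i, a i * 2 ^ (n - (i : ℕ))

lemma pot_add (x y : Fin n →₀ ℕ) : pot (x + y) = pot x + pot y := by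
  simp [pot, add_mul, Finset.sum_add_distrib]

lemma pot_single (j : Fin n) : pot (Finsupp.single j (1:ℕ)) = 2 ^ (n - (j : ℕ)) := by
  simp [pot, Finsupp.single_apply, ite_mul]

lemma mono_mem (U : Submodule K (Fin n → K)) (a : Fin n →₀ ℕ) :
    (monomial a 1 : MvPolynomial (Fin n) K) ∈
      (Ideal.span (iotaL '' (U : Set (Fin n → K)))).restrictScalars K ⊔
        Submodule.span K {f : MvPolynomial (Fin n) K | ∃ a', NBC U a' ∧ f = monomial a' 1} := by
  classical
  set M := (Ideal.span (iotaL '' (U : Set (Fin n → K)))).restrictScalars K ⊔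
        Submodule.span K {f : MvPolynomial (Fin n) K | ∃ a', NBC U a' ∧ f = monomial a' 1} with hM
  generalize hN : pot a = N
  induction N using Nat.strong_induction_on generalizing a with
  | _ N ihN =>
  subst hN
  by_cases hnbc : NBC U a
  · exact Submodule.mem_sup_right (Submodule.subset_span ⟨a, hnbc, rfl⟩)
  · rw [NBC] at hnbc
    push_neg at hnbc
    obtain ⟨u, huU, hsne, hcov⟩ := hnbc
    have hcov' : ∀ i ∈ lsupp u, i ≠ (lsupp u).max' hsne → a i ≠ 0 := by
      intro i hi hne
      obtain h := hcov i hi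
      tauto
    set s := lsupp u with hs
    set j0 := s.max' hsne with hj0
    have hj0mem : j0 ∈ s := Finset.max'_mem _ _
    have huj0 : u j0 ≠ 0 := mem_lsupp.mp hj0mem
    set m0 := a - chi (s.erase j0) with hm0
    have KEY3 : m0 + chi (s.erase j0) = a := by
      ext c
      rw [Finsupp.add_apply, hm0, Finsupp.tsub_apply, chi_apply]
      by_cases hc : c ∈ s.erase j0
      · have hac : a c ≠ 0 := hcov' c (Finset.mem_erase.mp hc).2 (Finset.mem_erase.mp hc).1
        simp only [if_pos hc]
        omega
      · simp [hc]
    have KEY2 : ∀ i ∈ s.erase j0,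
        m0 + chi (s.erase i) = a - Finsupp.single i 1 + Finsupp.single j0 1 := by
      intro i hi
      have hij : i ≠ j0 := (Finset.mem_erase.mp hi).1
      have his : i ∈ s := (Finset.mem_erase.mp hi).2
      have hai : a i ≠ 0 := hcov' i his hij
      ext c
      rw [Finsupp.add_apply, Finsupp.add_apply, hm0, Finsupp.tsub_apply, Finsupp.tsub_apply,
        chi_apply, chi_apply, Finsupp.single_apply, Finsupp.single_apply]
      rcases eq_or_ne c i with rfl | hci
      · rw [if_pos hi, if_neg (fun h => (Finset.mem_erase.mp h).1 rfl), if_pos rfl,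
          if_neg (fun h => hij h.symm)]
      · rcases eq_or_ne c j0 with rfl | hcj
        · rw [if_neg (Finset.notMem_erase _ _), if_pos (Finset.mem_erase.mpr ⟨fun h => hci h, hj0mem⟩),
            if_neg (fun h => hci h.symm), if_pos rfl]
        · by_cases hcs : c ∈ s
          · have hac : a c ≠ 0 := hcov' c hcs hcj
            rw [if_pos (Finset.mem_erase.mpr ⟨hcj, hcs⟩), if_pos (Finset.mem_erase.mpr ⟨hci, hcs⟩),
              if_neg (fun h => hci h.symm), if_neg (fun h => hcj h.symm)]
            omega
          · rw [if_neg (fun h => hcs (Finset.mem_erase.mp h).2),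
              if_neg (fun h => hcs (Finset.mem_erase.mp h).2),
              if_neg (fun h => hci h.symm), if_neg (fun h => hcj h.symm)]
    have hiota : monomial m0 1 * iotaL u
        = ∑ i ∈ s, C (u i) * monomial (m0 + chi (s.erase i)) 1 := by
      rw [iotaL_eq, Finset.mul_sum]
      refine Finset.sum_congr rfl fun i hi => ?_
      rw [show (monomial m0 1 : MvPolynomial (Fin n) K) * (C (u i) * monomial (chi ((lsupp u).erase i)) 1)
        = C (u i) * (monomial m0 1 * monomial (chi ((lsupp u).erase i)) 1) from by ring,
        monomial_mul, one_mul]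
    have hstar : C (u j0) * monomial a 1
        = monomial m0 1 * iotaL u
          - ∑ i ∈ s.erase j0, C (u i) * monomial (a - Finsupp.single i 1 + Finsupp.single j0 1) 1 := by
      rw [eq_sub_iff_add_eq, hiota, ← Finset.add_sum_erase _ _ hj0mem, KEY3]
      congr 1
      refine Finset.sum_congr rfl fun i hi => ?_
      rw [KEY2 i hi]
    have hm1 : monomial m0 1 * iotaL u ∈ Ideal.span (iotaL '' (U : Set (Fin n → K))) :=
      Ideal.mul_mem_left _ _ (Ideal.subset_span ⟨u, huU, rfl⟩)
    have hrec : ∀ i ∈ s.erase j0,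
        (monomial (a - Finsupp.single i 1 + Finsupp.single j0 1) 1 : MvPolynomial (Fin n) K) ∈ M := by
      intro i hi
      have hij : i ≠ j0 := (Finset.mem_erase.mp hi).1
      have his : i ∈ s := (Finset.mem_erase.mp hi).2
      have hai : a i ≠ 0 := hcov' i his hij
      refine ihN (pot (a - Finsupp.single i 1 + Finsupp.single j0 1)) ?_ _ rfl
      have hsle : Finsupp.single i 1 ≤ a := Finsupp.single_le_iff.mpr (by omega)
      have h1 : pot (a - Finsupp.single i 1 + Finsupp.single j0 1)
          = pot (a - Finsupp.single i 1) + 2 ^ (n - (j0 : ℕ)) := by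
        rw [pot_add, pot_single]
      have h2 : pot (a - Finsupp.single i 1) + 2 ^ (n - (i : ℕ)) = pot a := by
        rw [← pot_single i, ← pot_add, tsub_add_cancel_of_le hsle]
      have hij' : (i : ℕ) < (j0 : ℕ) := by
        have hle' : i ≤ j0 := Finset.le_max' s i his
        exact Fin.lt_iff_val_lt_val.mp (lt_of_le_of_ne hle' hij)
      have hlt : 2 ^ (n - (j0 : ℕ)) < 2 ^ (n - (i : ℕ)) := by
        have hj0n : (j0 : ℕ) < n := j0.isLt
        exact Nat.pow_lt_pow_right one_lt_two (by omega)
      omega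
    have hsum : C (u j0) * monomial a 1 ∈ M := by
      rw [hstar]
      refine sub_mem ?_ (Submodule.sum_mem _ fun i hi => ?_)
      · exact Submodule.mem_sup_left hm1
      · rw [← smul_eq_C_mul]
        exact Submodule.smul_mem _ _ (hrec i hi)
    have hfin : (monomial a 1 : MvPolynomial (Fin n) K)
        = (u j0)⁻¹ • (C (u j0) * monomial a 1) := by
      rw [← smul_eq_C_mul, smul_smul, inv_mul_cancel₀ huj0, one_smul]
    rw [hfin]
    exact Submodule.smul_mem _ _ hsum

def etaP (u : Fin n → K) : MvPolynomial (Fin n) K :=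
  ∑ i, C (u i) * monomial (chi (Finset.univ.erase i)) 1

lemma chi_union {s t : Finset (Fin n)} (h : Disjoint s t) : chi (s ∪ t) = chi s + chi t := by
  rw [chi, chi, chi, Finset.sum_union h]

lemma eta_eq (u : Fin n → K) :
    monomial (chi (Finset.univ \ lsupp u)) 1 * iotaL u = etaP u := by
  rw [iotaL_eq, Finset.mul_sum, etaP]
  rw [← Finset.sum_subset (Finset.subset_univ (lsupp u))
    (fun i _ hi => by rw [show u i = 0 from by_contra (fun h => hi (mem_lsupp.mpr h)), map_zero,
      zero_mul])]
  refine Finset.sum_congr rfl fun i hi => ?_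
  have hdisj : Disjoint (Finset.univ \ lsupp u) ((lsupp u).erase i) :=
    Finset.disjoint_of_subset_right (Finset.erase_subset _ _) Finset.sdiff_disjoint
  have hsets : (Finset.univ \ lsupp u) ∪ ((lsupp u).erase i) = Finset.univ.erase i := by
    ext c
    simp only [Finset.mem_union, Finset.mem_sdiff, Finset.mem_erase, Finset.mem_univ,
      true_and, and_true]
    constructor
    · rintro (hc | ⟨hc1, hc2⟩)
      · intro hci; exact hc (hci ▸ hi)
      · exact hc1
    · intro hc
      by_cases hcs : c ∈ lsupp u
      · exact Or.inr ⟨hc, hcs⟩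
      · exact Or.inl hcs
  rw [show (monomial (chi (Finset.univ \ lsupp u)) 1 : MvPolynomial (Fin n) K)
      * (C (u i) * monomial (chi ((lsupp u).erase i)) 1)
    = C (u i) * (monomial (chi (Finset.univ \ lsupp u)) 1
      * monomial (chi ((lsupp u).erase i)) 1) from by ring, monomial_mul, one_mul,
    ← chi_union hdisj, hsets]

lemma etaP_add (u v : Fin n → K) : etaP (u + v) = etaP u + etaP v := by
  rw [etaP, etaP, etaP, ← Finset.sum_add_distrib]
  refine Finset.sum_congr rfl fun i _ => ?_
  rw [Pi.add_apply, map_add, add_mul]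

lemma etaP_smul (t : K) (u : Fin n → K) : etaP (t • u) = t • etaP u := by
  rw [etaP, etaP, Finset.smul_sum]
  refine Finset.sum_congr rfl fun i _ => ?_
  rw [Pi.smul_apply, smul_eq_mul, map_mul, smul_eq_C_mul, mul_assoc]

lemma etaP_mem (R : Set (Fin n → K)) {u : Fin n → K} (hu : u ∈ Submodule.span K R) :
    etaP u ∈ Jid R := by
  refine Submodule.span_induction ?_ ?_ ?_ ?_ hu
  · intro r hr
    rw [← eta_eq]
    exact Ideal.mul_mem_left _ _ (Ideal.subset_span ⟨r, hr, rfl⟩)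
  · rw [show etaP (0 : Fin n → K) = 0 from by simp [etaP]]
    exact Ideal.zero_mem _
  · intro x y _ _ hx hy
    rw [etaP_add]
    exact Ideal.add_mem _ hx hy
  · intro t x _ hx
    rw [etaP_smul, smul_eq_C_mul]
    exact Ideal.mul_mem_left _ _ hx

lemma xAll_mul_iota_mem (R : Set (Fin n → K)) {u : Fin n → K} (hu : u ∈ Submodule.span K R) :
    xAll n K * iotaL u ∈ Jid R := by
  have hx : xAll n K = monomial (chi (lsupp u)) 1 * monomial (chi (Finset.univ \ lsupp u)) 1 := by
    rw [monomial_mul, one_mul, ← chi_union Finset.disjoint_sdiff, Finset.union_sdiff_of_subset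
      (Finset.subset_univ _), xAll, prodX_eq]
  rw [hx, mul_assoc, eta_eq]
  exact Ideal.mul_mem_left _ _ (etaP_mem R hu)

lemma Iid_le_colon (R : Set (Fin n → K)) :
    Iid R ≤ (Jid R).colon (Ideal.span {xAll n K}) := by
  rw [Iid, Ideal.span_le]
  rintro f ⟨u, hu, rfl⟩
  rw [SetLike.mem_coe, Submodule.mem_colon]
  intro p hp
  obtain ⟨q, rfl⟩ := Ideal.mem_span_singleton'.mp hp
  rw [smul_eq_mul, show iotaL u * (q * xAll n K) = q * (xAll n K * iotaL u) from by ring]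
  exact Ideal.mul_mem_left _ q (xAll_mul_iota_mem R hu)

lemma eval_iotaL_inv (r w : Fin n → K) (hw : ∀ i, w i ≠ 0) (hdot : dotp r w = 0) :
    eval (fun i => (w i)⁻¹) (iotaL r) = 0 := by
  have hP : (∏ j ∈ lsupp r, w j) ≠ 0 := Finset.prod_ne_zero_iff.mpr fun j _ => hw j
  have hmul : (∏ j ∈ lsupp r, w j) * eval (fun i => (w i)⁻¹) (iotaL r) = dotp r w := by
    rw [iotaL, map_sum, Finset.mul_sum]
    have hdots : dotp r w = ∑ i ∈ lsupp r, r i * w i := by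
      refine (Finset.sum_subset (Finset.subset_univ _) fun i _ hi => ?_).symm
      rw [show r i = 0 from by_contra (fun h => hi (mem_lsupp.mpr h)), zero_mul]
    rw [hdots]
    refine Finset.sum_congr rfl fun i hi => ?_
    rw [map_mul, eval_C, map_prod]
    simp only [eval_X]
    rw [← Finset.mul_prod_erase _ _ hi]
    have hone : (∏ j ∈ (lsupp r).erase i, w j) * (∏ j ∈ (lsupp r).erase i, (w j)⁻¹) = 1 := by
      rw [← Finset.prod_mul_distrib]
      exact Finset.prod_eq_one fun j _ => mul_inv_cancel₀ (hw j)
    calc w i * (∏ j ∈ (lsupp r).erase i, w j) * (r i * ∏ j ∈ (lsupp r).erase i, (w j)⁻¹)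
        = r i * w i * ((∏ j ∈ (lsupp r).erase i, w j) * (∏ j ∈ (lsupp r).erase i, (w j)⁻¹)) := by
          ring
      _ = r i * w i := by rw [hone, mul_one]
  rw [hdot] at hmul
  rcases mul_eq_zero.mp hmul with h | h
  · exact absurd h hP
  · exact h

lemma support_NBC {U : Submodule K (Fin n → K)} {h : MvPolynomial (Fin n) K}
    (hh : h ∈ Submodule.span K {f : MvPolynomial (Fin n) K | ∃ a', NBC U a' ∧ f = monomial a' 1}) :
    ∀ a ∈ h.support, NBC U a := by
  classical
  refine Submodule.span_induction ?_ ?_ ?_ ?_ hh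
  · rintro f ⟨a', hnbc, rfl⟩ a ha
    rw [support_monomial, if_neg one_ne_zero] at ha
    rw [Finset.mem_singleton.mp ha]
    exact hnbc
  · intro a ha
    simp at ha
  · intro f g _ _ hf hg a ha
    rcases Finset.mem_union.mp (MvPolynomial.support_add ha) with h' | h'
    · exact hf a h'
    · exact hg a h'
  · intro t f _ hf a ha
    exact hf a (MvPolynomial.support_smul ha)

lemma eval_flip (h : MvPolynomial (Fin n) K) (b : Fin n →₀ ℕ)
    (hb : ∀ a ∈ h.support, ∀ i, a i ≤ b i) (w : Fin n → K) (hw : ∀ i, w i ≠ 0) :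
    eval w (∑ a ∈ h.support, monomial (b - a) (coeff a h))
      = (∏ i, w i ^ b i) * eval (fun i => (w i)⁻¹) h := by
  conv_rhs => rw [h.as_sum]
  rw [map_sum, map_sum, Finset.mul_sum]
  refine Finset.sum_congr rfl fun a ha => ?_
  rw [eval_monomial', eval_monomial']
  rw [show (∏ i, w i ^ b i) * (coeff a h * ∏ i, ((w i)⁻¹) ^ a i)
    = coeff a h * ∏ i, (w i ^ b i * ((w i)⁻¹) ^ a i) from by rw [Finset.prod_mul_distrib]; ring]
  congr 1
  refine Finset.prod_congr rfl fun i _ => ?_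
  rw [Finsupp.tsub_apply]
  have hle' := hb a ha i
  rw [inv_pow, eq_comm, mul_inv_eq_iff_eq_mul₀ (pow_ne_zero _ (hw i)), ← pow_add]
  congr 1
  omega

lemma inv_mem_zeroLocus {R : Set (Fin n → K)} {w : Fin n → K} (hw : ∀ i, w i ≠ 0)
    (hdots : ∀ r ∈ R, dotp r w = 0) :
    (fun i => (w i)⁻¹) ∈ MvPolynomial.zeroLocus K (Jid R) := by
  intro p hp
  have hle : Jid R ≤ MvPolynomial.vanishingIdeal K {fun i => (w i)⁻¹} := by
    rw [Jid, Ideal.span_le]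
    rintro f ⟨r, hr, rfl⟩
    rw [SetLike.mem_coe, MvPolynomial.mem_vanishingIdeal_iff]
    intro x hx
    rw [Set.mem_singleton_iff] at hx
    subst hx
    exact eval_iotaL_inv r w hw (hdots r hr)
  exact hle hp _ (Set.mem_singleton _)

theorem main_result [Infinite K] (R : Set (Fin n → K)) :
    MvPolynomial.vanishingIdeal K
        (MvPolynomial.zeroLocus K (Jid R) ∩ {p : Fin n → K | ∀ i, p i ≠ 0}) =
      (Jid R).colon (Ideal.span {xAll n K}) ∧
    MvPolynomial.vanishingIdeal K
        (MvPolynomial.zeroLocus K (Jid R) ∩ {p : Fin n → K | ∀ i, p i ≠ 0}) = Iid R ∧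
    MvPolynomial.zeroLocus K (Iid R) =
      MvPolynomial.zeroLocus K (MvPolynomial.vanishingIdeal K
        (MvPolynomial.zeroLocus K (Jid R) ∩ {p : Fin n → K | ∀ i, p i ≠ 0})) := by
  classical
  have hJA : Jid R ≤ MvPolynomial.vanishingIdeal K
      (MvPolynomial.zeroLocus K (Jid R) ∩ {p : Fin n → K | ∀ i, p i ≠ 0}) := by
    intro f hf
    rw [MvPolynomial.mem_vanishingIdeal_iff]
    intro x hx
    exact hx.1 f hf
  have hcolonA : (Jid R).colon (Ideal.span {xAll n K}) ≤ MvPolynomial.vanishingIdeal K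
      (MvPolynomial.zeroLocus K (Jid R) ∩ {p : Fin n → K | ∀ i, p i ≠ 0}) := by
    intro f hf
    rw [MvPolynomial.mem_vanishingIdeal_iff]
    intro x hx
    have hfx : f * xAll n K ∈ Jid R := by
      have h' := Submodule.mem_colon_span_singleton.mp hf
      rwa [smul_eq_mul] at h'
    have h0 : eval x (f * xAll n K) = 0 := hx.1 _ hfx
    rw [map_mul] at h0
    have hxall : eval x (xAll n K) ≠ 0 := by
      rw [xAll, map_prod]
      simp only [eval_X]
      exact Finset.prod_ne_zero_iff.mpr fun i _ => hx.2 i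
    rcases mul_eq_zero.mp h0 with h' | h'
    · exact h'
    · exact absurd h' hxall
  have hIcolon := Iid_le_colon R
  have hIA := le_trans hIcolon hcolonA
  have hAI : MvPolynomial.vanishingIdeal K
      (MvPolynomial.zeroLocus K (Jid R) ∩ {p : Fin n → K | ∀ i, p i ≠ 0}) ≤ Iid R := by
    intro f hf
    have hfM : f ∈ (Ideal.span (iotaL '' ((Submodule.span K R : Submodule K (Fin n → K)) :
          Set (Fin n → K)))).restrictScalars K ⊔
        Submodule.span K {g : MvPolynomial (Fin n) K |
          ∃ a', NBC (Submodule.span K R) a' ∧ g = monomial a' 1} := by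
      rw [f.as_sum]
      refine Submodule.sum_mem _ fun a ha => ?_
      rw [show (monomial a (coeff a f) : MvPolynomial (Fin n) K)
        = (coeff a f) • monomial a 1 from by rw [smul_monomial, smul_eq_mul, mul_one]]
      exact Submodule.smul_mem _ _ (mono_mem (Submodule.span K R) a)
    obtain ⟨g, hg, h, hh, hf_eq⟩ := Submodule.mem_sup.mp hfM
    have hgI : g ∈ Iid R := hg
    have hhA : h ∈ MvPolynomial.vanishingIdeal K
        (MvPolynomial.zeroLocus K (Jid R) ∩ {p : Fin n → K | ∀ i, p i ≠ 0}) := by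
      have heq : h = f - g := by rw [← hf_eq]; ring
      rw [heq]
      exact Submodule.sub_mem _ hf (hIA hgI)
    set b : Fin n →₀ ℕ :=
      Finsupp.equivFunOnFinite.symm (fun i => (h.support.sup (fun a => a i)) + 1) with hbdef
    have hbi : ∀ i, b i = (h.support.sup (fun a => a i)) + 1 := fun i => rfl
    have hba : ∀ a ∈ h.support, ∀ i, a i ≤ b i := by
      intro a ha i
      have h1 : a i ≤ h.support.sup (fun a => a i) := Finset.le_sup (f := fun a => a i) ha
      rw [hbi]
      omega
    have hvanW : ∀ w ∈ Wset (Submodule.span K R),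
        eval w (∑ a ∈ h.support, monomial (b - a) (coeff a h)) = 0 := by
      intro w hwW
      by_cases hw0 : ∀ i, w i ≠ 0
      · rw [eval_flip h b hba w hw0]
        have hinvX : (fun i => (w i)⁻¹) ∈
            MvPolynomial.zeroLocus K (Jid R) ∩ {p : Fin n → K | ∀ i, p i ≠ 0} := by
          constructor
          · exact inv_mem_zeroLocus hw0 (fun r hr => hwW r (Submodule.subset_span hr))
          · intro i
            exact inv_ne_zero (hw0 i)
        rw [MvPolynomial.mem_vanishingIdeal_iff] at hhA
        rw [show eval (fun i => (w i)⁻¹) h = 0 from hhA _ hinvX, mul_zero]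
      · push_neg at hw0
        obtain ⟨i0, hi0⟩ := hw0
        rw [map_sum]
        refine Finset.sum_eq_zero fun a ha => ?_
        rw [eval_monomial']
        have hz : w i0 ^ ((b - a) i0) = 0 := by
          rw [Finsupp.tsub_apply, hi0]
          refine zero_pow ?_
          have h1 : a i0 ≤ h.support.sup (fun a => a i0) :=
            Finset.le_sup (f := fun a => a i0) ha
          have h2 := hbi i0
          omega
        rw [Finset.prod_eq_zero (Finset.mem_univ i0) hz, mul_zero]
    have hcoeff := indep n (Submodule.span K R) b h.support (fun a => coeff a h)
      (support_NBC hh) hba hvanW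
    have hh0 : h = 0 := by
      apply MvPolynomial.support_eq_empty.mp
      refine Finset.eq_empty_of_forall_notMem fun a ha => ?_
      exact (MvPolynomial.mem_support_iff.mp ha) (hcoeff a ha)
    rw [← hf_eq, hh0, add_zero]
    exact hgI
  refine ⟨le_antisymm (le_trans hAI hIcolon) hcolonA, le_antisymm hAI hIA, ?_⟩
  rw [le_antisymm hAI hIA]

end OTProof

/-- Remark 3.5: over an algebraically closed field, for `ℜ ⊆ F(𝒜)` the vanishing ideal of
`V(J(ℜ)) ∩ (K*)ⁿ` equals `J(ℜ) : x_[n] = I(ℜ)`; equivalently, `V(I(ℜ))` is the Zariski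
closure of `V(J(ℜ)) ∩ (K*)ⁿ` (its zero locus is that of the vanishing ideal of
`V(J(ℜ)) ∩ (K*)ⁿ`). -/
theorem vanishingIdeal_zeroLocus_inter_torus
    [IsAlgClosed K]
    {V : Type*} [AddCommGroup V] [Module K V] [FiniteDimensional K V]
    (α : Fin n → Module.Dual K V) (hne : ∀ i, α i ≠ 0)
    (hdist : ∀ i j, i ≠ j → LinearMap.ker (α i) ≠ LinearMap.ker (α j))
    (R : Set (Fin n → K)) (hR : ∀ r ∈ R, IsRel α r) :
    MvPolynomial.vanishingIdeal K
        (MvPolynomial.zeroLocus K (Jid R) ∩ {p : Fin n → K | ∀ i, p i ≠ 0}) =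
      (Jid R).colon (Ideal.span {xAll n K}) ∧
    MvPolynomial.vanishingIdeal K
        (MvPolynomial.zeroLocus K (Jid R) ∩ {p : Fin n → K | ∀ i, p i ≠ 0}) = Iid R ∧
    MvPolynomial.zeroLocus K (Iid R) =
      MvPolynomial.zeroLocus K (MvPolynomial.vanishingIdeal K
        (MvPolynomial.zeroLocus K (Jid R) ∩ {p : Fin n → K | ∀ i, p i ≠ 0})) :=
  OTProof.main_result R

end
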